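/- Let K ≥ 2 be an integer and let ψ : ℕ → (0, ∞) satisfy Σ_{q=1}^{∞} q^{K−2}·ψ(q) < ∞. Then the set 𝒜_{K−1}(ψ) of tuples (h_1, ..., h_{K−1}) ∈ ℝ^{K−1} such that the inequality |p + q_1·h_1 + q_2·h_2 + ... + q_{K−1}·h_{K−1}| < ψ(|q|_∞) holds for infinitely many pairs (p, q) with p ∈ ℤ and q = (q_1, ..., q_{K−1}) ∈ ℤ^{K−1} \ {0} has (K−1)-dimensional Lebesgue measure zero. -/

import Mathlib

open MeasureTheory Set Filter
open scoped ENNReal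

lemma oneDim (a : ℤ) (ha : a ≠ 0) (ψ b c : ℝ) (hψ : 0 < ψ) :
    volume {x : ℝ | x ∈ Icc c (c + 1) ∧ ∃ p : ℤ, |(p : ℝ) + a * x + b| < ψ} ≤
      ENNReal.ofReal (4 * ψ + 4 * ψ ^ 2) := by
  set m : ℝ := (a.natAbs : ℝ) with hm
  have hm1 : 1 ≤ m := by
    have h : 1 ≤ a.natAbs := Nat.one_le_iff_ne_zero.2 (Int.natAbs_ne_zero.mpr ha)
    rw [hm]
    exact_mod_cast h
  have hm0 : 0 < m := lt_of_lt_of_le one_pos hm1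
  have habs : |(a : ℝ)| = m := by
    rw [hm, Nat.cast_natAbs, Int.cast_abs]
  have ha0 : (a : ℝ) ≠ 0 := Int.cast_ne_zero.mpr ha
  set d : ℝ := min ((a : ℝ) * c) ((a : ℝ) * (c + 1)) with hd
  have hrange : ∀ x ∈ Icc c (c + 1), d ≤ (a : ℝ) * x ∧ (a : ℝ) * x ≤ d + m := by
    intro x hx
    rcases le_or_gt 0 ((a : ℝ)) with h | h
    · have h1 : (a : ℝ) * c ≤ (a : ℝ) * x := mul_le_mul_of_nonneg_left hx.1 h
      have h2 : (a : ℝ) * x ≤ (a : ℝ) * (c + 1) := mul_le_mul_of_nonneg_left hx.2 h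
      have habs' : (a : ℝ) = m := by rw [← habs, abs_of_nonneg h]
      constructor
      · exact le_trans (min_le_left _ _) h1
      · have : d = (a : ℝ) * c := min_eq_left (by nlinarith)
        rw [this]; nlinarith
    · have h1 : (a : ℝ) * (c + 1) ≤ (a : ℝ) * x := mul_le_mul_of_nonpos_left hx.2 h.le
      have h2 : (a : ℝ) * x ≤ (a : ℝ) * c := mul_le_mul_of_nonpos_left hx.1 h.le
      have habs' : (a : ℝ) = -m := by
        rw [← habs, abs_of_neg h]; ring
      constructor
      · exact le_trans (min_le_right _ _) h1
      · have : d = (a : ℝ) * (c + 1) := min_eq_right (by nlinarith)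
        rw [this]; nlinarith
  set P : Finset ℤ := Finset.Icc ⌈-ψ - b - d - m⌉ ⌊ψ - b - d⌋ with hP
  have hsub : {x : ℝ | x ∈ Icc c (c + 1) ∧ ∃ p : ℤ, |(p : ℝ) + a * x + b| < ψ} ⊆
      ⋃ p ∈ P, Metric.ball ((-(p : ℝ) - b) / a) (ψ / m) := by
    rintro x ⟨hx, p, hp⟩
    have hax := hrange x hx
    have habs2 : |(p : ℝ) + a * x + b| < ψ := hp
    have hlt : (p : ℝ) < ψ - b - d := by
      have := abs_lt.1 habs2
      nlinarith [hax.1]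
    have hgt : -ψ - b - d - m < (p : ℝ) := by
      have := abs_lt.1 habs2
      nlinarith [hax.2]
    have hpP : p ∈ P := by
      rw [hP, Finset.mem_Icc]
      constructor
      · exact Int.ceil_le.2 hgt.le
      · exact Int.le_floor.2 hlt.le
    refine mem_biUnion hpP ?_
    rw [Metric.mem_ball, Real.dist_eq]
    have heq : x - (-(p : ℝ) - b) / a = ((p : ℝ) + a * x + b) / a := by
      field_simp; ring
    rw [heq, abs_div, habs]
    exact div_lt_div_of_pos_right habs2 hm0
  calc volume {x : ℝ | x ∈ Icc c (c + 1) ∧ ∃ p : ℤ, |(p : ℝ) + a * x + b| < ψ}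
      ≤ volume (⋃ p ∈ P, Metric.ball ((-(p : ℝ) - b) / a) (ψ / m)) := measure_mono hsub
    _ ≤ ∑ p ∈ P, volume (Metric.ball ((-(p : ℝ) - b) / a) (ψ / m)) :=
        measure_biUnion_finset_le P _
    _ = P.card • ENNReal.ofReal (2 * (ψ / m)) := by
        simp [Real.volume_ball]
    _ ≤ ENNReal.ofReal (4 * ψ + 4 * ψ ^ 2) := by
        have hcard : (P.card : ℝ) ≤ 2 * ψ + m + 1 := by
          rw [hP, Int.card_Icc]
          rcases le_or_gt ((⌊ψ - b - d⌋ + 1 - ⌈-ψ - b - d - m⌉ : ℤ)) 0 with h | h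
          · have hz : (⌊ψ - b - d⌋ + 1 - ⌈-ψ - b - d - m⌉).toNat = 0 := by omega
            rw [hz]
            simp only [Nat.cast_zero]
            positivity
          · have hcast : (((⌊ψ - b - d⌋ + 1 - ⌈-ψ - b - d - m⌉).toNat : ℕ) : ℝ)
                = ((⌊ψ - b - d⌋ + 1 - ⌈-ψ - b - d - m⌉ : ℤ) : ℝ) := by
              exact_mod_cast Int.toNat_of_nonneg h.le
            rw [hcast]
            push_cast
            have h1 : (⌊ψ - b - d⌋ : ℝ) ≤ ψ - b - d := Int.floor_le _
            have h2 : -ψ - b - d - m ≤ (⌈-ψ - b - d - m⌉ : ℝ) := Int.le_ceil _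
            linarith
        rw [nsmul_eq_mul, ← ENNReal.ofReal_natCast, ← ENNReal.ofReal_mul (by positivity)]
        apply ENNReal.ofReal_le_ofReal
        have hy : (0:ℝ) ≤ 2 * (ψ / m) := by positivity
        have : (P.card : ℝ) * (2 * (ψ / m)) ≤ (2 * ψ + m + 1) * (2 * (ψ / m)) :=
          mul_le_mul_of_nonneg_right hcard hy
        refine this.trans ?_
        have hid : (2 * ψ + m + 1) * (2 * (ψ / m)) = (4 * ψ ^ 2 + 2 * ψ * m + 2 * ψ) / m := by
          field_simp; ring
        rw [hid, div_le_iff₀ hm0]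
        nlinarith [mul_le_mul_of_nonneg_right hm1 hψ.le,
          mul_le_mul_of_nonneg_right hm1 (sq_nonneg ψ)]

lemma cubeBound (n : ℕ) (q : Fin (n + 1) → ℤ) (hq : q ≠ 0) (c : Fin (n + 1) → ℝ)
    (ψ' : ℝ) (hψ' : 0 < ψ') :
    volume ({h : Fin (n + 1) → ℝ | ∃ p : ℤ, |(p : ℝ) + ∑ k, (q k : ℝ) * h k| < ψ'} ∩
      Set.univ.pi fun k => Icc (c k) (c k + 1)) ≤ ENNReal.ofReal (4 * ψ' + 4 * ψ' ^ 2) := by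
  obtain ⟨i, hi⟩ : ∃ i, q i ≠ 0 := by
    by_contra h
    push_neg at h
    exact hq (funext h)
  set A : Set (Fin (n + 1) → ℝ) :=
    {h | ∃ p : ℤ, |(p : ℝ) + ∑ k, (q k : ℝ) * h k| < ψ'} with hA
  set cube : Set (Fin (n + 1) → ℝ) := Set.univ.pi fun k => Icc (c k) (c k + 1) with hcube
  have hAm : MeasurableSet A := by
    have : A = ⋃ p : ℤ, {h : Fin (n + 1) → ℝ | |(p : ℝ) + ∑ k, (q k : ℝ) * h k| < ψ'} := by
      ext h; simp [hA]
    rw [this]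
    refine MeasurableSet.iUnion fun p => ?_
    exact measurableSet_lt (by fun_prop) measurable_const
  have hcubem : MeasurableSet cube :=
    MeasurableSet.univ_pi fun k => measurableSet_Icc
  have hSm : MeasurableSet (A ∩ cube) := hAm.inter hcubem
  set e := MeasurableEquiv.piFinSuccAbove (fun _ : Fin (n + 1) => ℝ) i with he
  have hmp : MeasurePreserving e (Measure.pi fun _ => volume)
      ((volume : Measure ℝ).prod (Measure.pi fun _ : Fin n => (volume : Measure ℝ))) :=
    measurePreserving_piFinSuccAbove (fun _ : Fin (n + 1) => (volume : Measure ℝ)) i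
  set ν := (volume : Measure ℝ).prod (Measure.pi fun _ : Fin n => (volume : Measure ℝ)) with hν
  have hSm' : MeasurableSet (e.symm ⁻¹' (A ∩ cube)) := e.symm.measurable hSm
  have key : volume (A ∩ cube) = ν (e.symm ⁻¹' (A ∩ cube)) := by
    rw [volume_pi]
    exact ((hmp.symm).measure_preimage hSm.nullMeasurableSet).symm
  rw [key, Measure.prod_apply_symm hSm']
  have hesymm : ∀ (x : ℝ) (y : Fin n → ℝ), e.symm (x, y) = i.insertNth (α := fun _ => ℝ) x y := fun x y => rfl
  set subcube : Set (Fin n → ℝ) :=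
    Set.univ.pi fun j => Icc (c (i.succAbove j)) (c (i.succAbove j) + 1) with hsubcube
  have hslice : ∀ y : Fin n → ℝ,
      volume ((fun x => (x, y)) ⁻¹' (e.symm ⁻¹' (A ∩ cube))) ≤
        subcube.indicator (fun _ => ENNReal.ofReal (4 * ψ' + 4 * ψ' ^ 2)) y := by
    intro y
    have hsum : ∀ x : ℝ, ∑ k, (q k : ℝ) * (i.insertNth (α := fun _ => ℝ) x y) k =
        (q i : ℝ) * x + ∑ j, (q (i.succAbove j) : ℝ) * y j := by
      intro x
      rw [Fin.sum_univ_succAbove (fun k => (q k : ℝ) * (i.insertNth (α := fun _ => ℝ) x y) k) i]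
      simp [Fin.insertNth_apply_same, Fin.insertNth_apply_succAbove]
    by_cases hy : y ∈ subcube
    · rw [indicator_of_mem hy]
      refine le_trans (measure_mono ?_)
        (oneDim (q i) hi ψ' (∑ j, (q (i.succAbove j) : ℝ) * y j) (c i) hψ')
      rintro x hx
      simp only [mem_preimage, hesymm] at hx
      obtain ⟨⟨p, hp⟩, hcube'⟩ := hx
      refine ⟨?_, p, ?_⟩
      · have := hcube' i (mem_univ i)
        simpa [Fin.insertNth_apply_same] using this
      · rw [hsum x] at hp
        convert hp using 2
        ring
    · rw [indicator_of_notMem hy]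
      apply le_of_eq
      rw [← measure_empty (μ := (volume : Measure ℝ))]
      congr 1
      ext x
      simp only [mem_preimage, hesymm, mem_empty_iff_false, iff_false]
      rintro ⟨-, hcube'⟩
      refine hy fun j _ => ?_
      have := hcube' (i.succAbove j) (mem_univ _)
      simpa [Fin.insertNth_apply_succAbove] using this
  calc ∫⁻ y, volume ((fun x => (x, y)) ⁻¹' (e.symm ⁻¹' (A ∩ cube)))
          ∂(Measure.pi fun _ : Fin n => (volume : Measure ℝ))
      ≤ ∫⁻ y, subcube.indicator (fun _ => ENNReal.ofReal (4 * ψ' + 4 * ψ' ^ 2)) y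
          ∂(Measure.pi fun _ : Fin n => (volume : Measure ℝ)) := lintegral_mono hslice
    _ = ENNReal.ofReal (4 * ψ' + 4 * ψ' ^ 2) *
          (Measure.pi fun _ : Fin n => (volume : Measure ℝ)) subcube := by
        rw [lintegral_indicator (MeasurableSet.univ_pi fun j => measurableSet_Icc),
          setLIntegral_const]
    _ ≤ ENNReal.ofReal (4 * ψ' + 4 * ψ' ^ 2) := by
        have : (Measure.pi fun _ : Fin n => (volume : Measure ℝ)) subcube = 1 := by
          rw [hsubcube, Measure.pi_pi]
          simp [Real.volume_Icc]
        rw [this, mul_one]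

lemma sumBound (n : ℕ) (ψ : ℕ → ℝ) (hψ : ∀ q, 0 < ψ q)
    (hsum : Summable fun m : ℕ => (m : ℝ) ^ n * ψ m) (C : ℝ) :
    ∑' q : {q : Fin (n + 1) → ℤ // q ≠ 0},
      ENNReal.ofReal (C * ψ (Finset.univ.sup fun k => ((q : Fin (n + 1) → ℤ) k).natAbs))
        ≠ ∞ := by
  set F : (Fin (n + 1) → ℤ) → ℝ≥0∞ :=
    fun q => ENNReal.ofReal (C * ψ (Finset.univ.sup fun k => (q k).natAbs)) with hF
  have step1 : ∑' q : {q : Fin (n + 1) → ℤ // q ≠ 0}, F (q : Fin (n + 1) → ℤ) ≤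
      ∑' q : Fin (n + 1) → ℤ, F q :=
    ENNReal.summable.tsum_le_tsum_of_inj Subtype.val Subtype.val_injective (fun _ _ => zero_le)
      (fun _ => le_rfl) ENNReal.summable
  set G : Fin (n + 1) → (Fin (n + 1) → ℤ) → ℝ≥0∞ := fun k q =>
    if ∀ j, (q j).natAbs ≤ (q k).natAbs then ENNReal.ofReal (C * ψ ((q k).natAbs)) else 0
    with hG
  have step2 : ∀ q : Fin (n + 1) → ℤ, F q ≤ ∑ k, G k q := by
    intro q
    obtain ⟨k, -, hk⟩ := Finset.exists_mem_eq_sup (Finset.univ : Finset (Fin (n + 1)))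
      Finset.univ_nonempty (fun k => (q k).natAbs : Fin (n + 1) → ℕ)
    have hmax : ∀ j, (q j).natAbs ≤ (q k).natAbs := by
      intro j
      calc (q j).natAbs ≤ Finset.univ.sup (fun k => (q k).natAbs) :=
            Finset.le_sup (f := fun k => (q k).natAbs) (Finset.mem_univ j)
        _ = (q k).natAbs := hk
    have hGk : G k q = F q := by
      simp only [hG, hF]
      rw [hk, if_pos hmax]
    rw [← hGk]
    exact Finset.single_le_sum (f := fun k => G k q) (fun _ _ => zero_le)
      (Finset.mem_univ k)
  have step3 : ∑' q : Fin (n + 1) → ℤ, F q ≤ ∑ k, ∑' q : Fin (n + 1) → ℤ, G k q := by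
    rw [← Summable.tsum_finsetSum fun k _ => ENNReal.summable]
    exact ENNReal.tsum_le_tsum step2
  have step4 : ∀ k : Fin (n + 1), ∑' q : Fin (n + 1) → ℤ, G k q =
      ∑' s : ℤ, (((2 * s.natAbs + 1) ^ n : ℕ) : ℝ≥0∞) * ENNReal.ofReal (C * ψ s.natAbs) := by
    intro k
    rw [← (Fin.insertNthEquiv (fun _ => ℤ) k).tsum_eq (fun q => G k q)]
    have hGins : ∀ (s : ℤ) (r : Fin n → ℤ),
        G k (Fin.insertNthEquiv (fun _ => ℤ) k (s, r)) =
          if ∀ j, (r j).natAbs ≤ s.natAbs then ENNReal.ofReal (C * ψ s.natAbs) else 0 := by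
      intro s r
      have h1 : Fin.insertNthEquiv (fun _ => ℤ) k (s, r) = k.insertNth s r := rfl
      rw [h1, hG]
      simp only [Fin.insertNth_apply_same]
      congr 1
      rw [eq_iff_iff, k.forall_iff_succAbove]
      simp [Fin.insertNth_apply_same, Fin.insertNth_apply_succAbove]
    calc ∑' z : ℤ × (Fin n → ℤ), G k (Fin.insertNthEquiv (fun _ => ℤ) k z)
        = ∑' (s : ℤ) (r : Fin n → ℤ),
            if ∀ j, (r j).natAbs ≤ s.natAbs then ENNReal.ofReal (C * ψ s.natAbs) else 0 := by
          rw [ENNReal.tsum_prod']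
          exact tsum_congr fun s => tsum_congr fun r => hGins s r
      _ = ∑' s : ℤ, (((2 * s.natAbs + 1) ^ n : ℕ) : ℝ≥0∞) * ENNReal.ofReal (C * ψ s.natAbs) := by
          refine tsum_congr fun s => ?_
          set R : Finset (Fin n → ℤ) :=
            Fintype.piFinset fun _ : Fin n => Finset.Icc (-(s.natAbs : ℤ)) (s.natAbs) with hR
          have hcard : R.card = (2 * s.natAbs + 1) ^ n := by
            rw [hR, Fintype.card_piFinset]
            have h2 : ∀ j : Fin n,
                (Finset.Icc (-(s.natAbs : ℤ)) (s.natAbs : ℤ)).card = 2 * s.natAbs + 1 := by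
              intro j
              rw [Int.card_Icc]
              omega
            rw [Finset.prod_congr rfl fun j _ => h2 j, Finset.prod_const, Finset.card_univ,
              Fintype.card_fin]
          rw [tsum_eq_sum (s := R) ?h0]
          · rw [Finset.sum_ite_of_true, Finset.sum_const, hcard, nsmul_eq_mul]
            intro r hr
            rw [hR, Fintype.mem_piFinset] at hr
            intro j
            have := hr j
            rw [Finset.mem_Icc] at this
            omega
          case h0 =>
            intro r hr
            rw [hR, Fintype.mem_piFinset] at hr
            push_neg at hr
            obtain ⟨j, hj⟩ := hr
            rw [Finset.mem_Icc] at hj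
            rw [if_neg]
            intro hall
            have := hall j
            omega
  set g : ℕ → ℝ≥0∞ :=
    fun m => (((2 * m + 1) ^ n : ℕ) : ℝ≥0∞) * ENNReal.ofReal (C * ψ m) with hg
  have step5 : ∑' s : ℤ, g s.natAbs ≤ 2 * ∑' m : ℕ, g m := by
    have huniv : (Set.univ : Set ℤ) =
        Set.range ((↑) : ℕ → ℤ) ∪ Set.range (fun m : ℕ => -(m : ℤ)) := by
      ext s
      simp only [mem_univ, true_iff, mem_union, mem_range]
      rcases le_or_gt 0 s with h | h
      · exact Or.inl ⟨s.toNat, Int.toNat_of_nonneg h⟩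
      · exact Or.inr ⟨s.natAbs, by omega⟩
    calc ∑' s : ℤ, g s.natAbs = ∑' s : (Set.univ : Set ℤ), g (s : ℤ).natAbs :=
          (tsum_univ fun s : ℤ => g s.natAbs).symm
      _ = ∑' s : ↑(Set.range ((↑) : ℕ → ℤ) ∪ Set.range (fun m : ℕ => -(m : ℤ))),
            g (s : ℤ).natAbs := by rw [← huniv]
      _ ≤ (∑' s : ↑(Set.range ((↑) : ℕ → ℤ)), g (s : ℤ).natAbs) +
            ∑' s : ↑(Set.range (fun m : ℕ => -(m : ℤ))), g (s : ℤ).natAbs :=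
          ENNReal.tsum_union_le (fun s : ℤ => g s.natAbs) _ _
      _ = (∑' m : ℕ, g ((m : ℤ)).natAbs) + ∑' m : ℕ, g ((-(m : ℤ)).natAbs) := by
          rw [tsum_range (fun s : ℤ => g s.natAbs) Nat.cast_injective,
            tsum_range (fun s : ℤ => g s.natAbs) (fun x y hxy => by omega)]
      _ = 2 * ∑' m : ℕ, g m := by
          simp only [Int.natAbs_natCast, Int.natAbs_neg]
          ring
  have step6 : ∑' m : ℕ, g m ≠ ∞ := by
    set u : ℕ → ℝ := fun m => ((2 * m + 1 : ℕ) : ℝ) ^ n * (|C| * ψ m) with hu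
    have hu_nonneg : ∀ m, 0 ≤ u m := by
      intro m
      have := (hψ m).le
      positivity
    have husum : Summable u := by
      rw [← summable_nat_add_iff 1]
      refine Summable.of_nonneg_of_le (fun m => hu_nonneg (m + 1)) (fun m => ?_)
        (((summable_nat_add_iff 1).mpr hsum).mul_left (3 ^ n * |C|))
      have hψ' := (hψ (m + 1)).le
      have h1 : (2 * ((m : ℝ) + 1) + 1) ^ n ≤ (3 : ℝ) ^ n * ((m : ℝ) + 1) ^ n := by
        rw [← mul_pow]
        refine pow_le_pow_left₀ (by positivity) (by linarith) n
      have habs : (0 : ℝ) ≤ |C| * ψ (m + 1) := by positivity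
      calc u (m + 1) = (2 * ((m : ℝ) + 1) + 1) ^ n * (|C| * ψ (m + 1)) := by
            rw [hu]; push_cast; ring
        _ ≤ (3 : ℝ) ^ n * ((m : ℝ) + 1) ^ n * (|C| * ψ (m + 1)) :=
            mul_le_mul_of_nonneg_right h1 habs
        _ = 3 ^ n * |C| * (((m + 1 : ℕ) : ℝ) ^ n * ψ (m + 1)) := by push_cast; ring
    have hterm : ∀ m : ℕ, g m ≤ ENNReal.ofReal (u m) := by
      intro m
      simp only [hg, hu]
      rw [← ENNReal.ofReal_natCast ((2 * m + 1) ^ n), ← ENNReal.ofReal_mul (by positivity)]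
      apply ENNReal.ofReal_le_ofReal
      push_cast
      have h1 : C * ψ m ≤ |C| * ψ m := mul_le_mul_of_nonneg_right (le_abs_self C) (hψ m).le
      have h2 : (0 : ℝ) ≤ (2 * (m : ℝ) + 1) ^ n := by positivity
      exact mul_le_mul_of_nonneg_left h1 h2
    have hle : ∑' m : ℕ, g m ≤ ENNReal.ofReal (∑' m, u m) := by
      calc ∑' m : ℕ, g m ≤ ∑' m, ENNReal.ofReal (u m) := ENNReal.tsum_le_tsum hterm
        _ = ENNReal.ofReal (∑' m, u m) := (ENNReal.ofReal_tsum_of_nonneg hu_nonneg husum).symm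
    exact ne_top_of_le_ne_top ENNReal.ofReal_ne_top hle
  have step7 : ∑' q : Fin (n + 1) → ℤ, F q ≠ ∞ := by
    have hle : ∑' q : Fin (n + 1) → ℤ, F q ≤
        ((n + 1 : ℕ) : ℝ≥0∞) * (2 * ∑' m : ℕ, g m) := by
      refine step3.trans ?_
      calc ∑ k, ∑' q : Fin (n + 1) → ℤ, G k q
          = ∑ _k : Fin (n + 1), ∑' s : ℤ, g s.natAbs :=
            Finset.sum_congr rfl fun k _ => (step4 k).trans (tsum_congr fun s => rfl)
        _ ≤ ∑ _k : Fin (n + 1), 2 * ∑' m : ℕ, g m := Finset.sum_le_sum fun k _ => step5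
        _ = ((n + 1 : ℕ) : ℝ≥0∞) * (2 * ∑' m : ℕ, g m) := by
            rw [Finset.sum_const, Finset.card_univ, Fintype.card_fin, nsmul_eq_mul]
    exact ne_top_of_le_ne_top (ENNReal.mul_ne_top (ENNReal.natCast_ne_top _)
      (ENNReal.mul_ne_top (by simp) step6)) hle
  exact ne_top_of_le_ne_top step7 step1

lemma master (n : ℕ) (ψ : ℕ → ℝ) (hψ : ∀ q, 0 < ψ q)
    (hsum : Summable fun m : ℕ => (m : ℝ) ^ n * ψ m) :
    volume {h : Fin (n + 1) → ℝ |
      {pq : ℤ × (Fin (n + 1) → ℤ) | pq.2 ≠ 0 ∧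
        |(pq.1 : ℝ) + ∑ k, (pq.2 k : ℝ) * h k|
          < ψ (Finset.univ.sup fun k => (pq.2 k).natAbs)}.Infinite} = 0 := by
  set B : Set (Fin (n + 1) → ℝ) := {h |
    {pq : ℤ × (Fin (n + 1) → ℤ) | pq.2 ≠ 0 ∧
      |(pq.1 : ℝ) + ∑ k, (pq.2 k : ℝ) * h k|
        < ψ (Finset.univ.sup fun k => (pq.2 k).natAbs)}.Infinite} with hB
  -- the bound M on ψ over positive integers
  set M : ℝ := ∑' m : ℕ, (m : ℝ) ^ n * ψ m with hM
  have hterm_nonneg : ∀ m : ℕ, 0 ≤ (m : ℝ) ^ n * ψ m := by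
    intro m
    have := (hψ m).le
    positivity
  have hM0 : 0 ≤ M := tsum_nonneg hterm_nonneg
  have hψM : ∀ m : ℕ, 1 ≤ m → ψ m ≤ M := by
    intro m hm
    have h1 : ψ m ≤ (m : ℝ) ^ n * ψ m := by
      have hm1 : (1 : ℝ) ≤ (m : ℝ) ^ n := one_le_pow₀ (by exact_mod_cast hm)
      nlinarith [(hψ m).le]
    exact h1.trans (Summable.le_tsum hsum m fun j _ => hterm_nonneg j)
  -- reduce to a single cube
  have key : ∀ t : Fin (n + 1) → ℤ,
      volume (B ∩ Set.univ.pi fun k => Icc ((t k : ℝ)) ((t k : ℝ) + 1)) = 0 := by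
    intro t
    set cube : Set (Fin (n + 1) → ℝ) :=
      Set.univ.pi fun k => Icc ((t k : ℝ)) ((t k : ℝ) + 1) with hcube
    set s : {q : Fin (n + 1) → ℤ // q ≠ 0} → Set (Fin (n + 1) → ℝ) := fun q =>
      {h | ∃ p : ℤ, |(p : ℝ) + ∑ k, ((q : Fin (n + 1) → ℤ) k : ℝ) * h k|
        < ψ (Finset.univ.sup fun k => ((q : Fin (n + 1) → ℤ) k).natAbs)} ∩ cube with hs
    have hsub : B ∩ cube ⊆ limsup s cofinite := by
      rintro h ⟨hhB, hhc⟩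
      rw [mem_limsup_iff_frequently_mem, frequently_cofinite_iff_infinite]
      have hP : {pq : ℤ × (Fin (n + 1) → ℤ) | pq.2 ≠ 0 ∧
          |(pq.1 : ℝ) + ∑ k, (pq.2 k : ℝ) * h k|
            < ψ (Finset.univ.sup fun k => (pq.2 k).natAbs)}.Infinite := hhB
      set P := {pq : ℤ × (Fin (n + 1) → ℤ) | pq.2 ≠ 0 ∧
          |(pq.1 : ℝ) + ∑ k, (pq.2 k : ℝ) * h k|
            < ψ (Finset.univ.sup fun k => (pq.2 k).natAbs)} with hPdef
      have himg : (Prod.snd '' P).Infinite := by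
        intro hfin
        refine hP (Set.Finite.subset (hfin.biUnion (t := fun q => P ∩ Prod.snd ⁻¹' {q})
          ?_) ?_)
        · intro q hq
          have hfib : P ∩ Prod.snd ⁻¹' {q} ⊆
              (fun p : ℤ => (p, q)) '' {p : ℤ | |(p : ℝ) + ∑ k, (q k : ℝ) * h k|
                < ψ (Finset.univ.sup fun k => (q k).natAbs)} := by
            rintro ⟨p, q'⟩ ⟨hpq, hq'⟩
            simp only [mem_preimage, mem_singleton_iff] at hq'
            subst hq'
            exact ⟨p, hpq.2, rfl⟩
          refine Set.Finite.subset (Set.Finite.image _ ?_) hfib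
          set cc : ℝ := ∑ k, (q k : ℝ) * h k with hcc
          set ψ' : ℝ := ψ (Finset.univ.sup fun k => (q k).natAbs) with hψ'
          refine Set.Finite.subset (Finset.Icc ⌈-ψ' - cc⌉ ⌊ψ' - cc⌋ : Finset ℤ).finite_toSet
            ?_
          intro p hp
          simp only [mem_setOf_eq] at hp
          have := abs_lt.1 hp
          simp only [Finset.coe_Icc, mem_Icc]
          constructor
          · exact Int.ceil_le.2 (by linarith)
          · exact Int.le_floor.2 (by linarith)
        · intro pq hpq
          exact mem_biUnion ⟨pq, hpq, rfl⟩ ⟨hpq, rfl⟩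
      have hsubset : Prod.snd '' P ⊆ Subtype.val '' {i : {q : Fin (n + 1) → ℤ // q ≠ 0} |
          h ∈ s i} := by
        rintro q ⟨⟨p, q'⟩, hpq, rfl⟩
        exact ⟨⟨q', hpq.1⟩, ⟨⟨p, hpq.2⟩, hhc⟩, rfl⟩
      exact Set.Infinite.of_image _ (himg.mono hsubset)
    have hsum' : ∑' i, volume (s i) ≠ ∞ := by
      refine ne_top_of_le_ne_top (sumBound n ψ hψ hsum (4 + 4 * M))
        (ENNReal.tsum_le_tsum fun i => ?_)
      set m : ℕ := Finset.univ.sup fun k => ((i : Fin (n + 1) → ℤ) k).natAbs with hm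
      have hm1 : 1 ≤ m := by
        obtain ⟨k, hk⟩ : ∃ k, (i : Fin (n + 1) → ℤ) k ≠ 0 := by
          by_contra hc
          push_neg at hc
          exact i.2 (funext hc)
        calc 1 ≤ ((i : Fin (n + 1) → ℤ) k).natAbs :=
              Nat.one_le_iff_ne_zero.2 (Int.natAbs_ne_zero.mpr hk)
          _ ≤ m := Finset.le_sup (f := fun k => ((i : Fin (n + 1) → ℤ) k).natAbs)
              (Finset.mem_univ k)
      refine (cubeBound n (i : Fin (n + 1) → ℤ) i.2 (fun k => (t k : ℝ)) (ψ m)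
        (hψ m)).trans ?_
      apply ENNReal.ofReal_le_ofReal
      have h1 : ψ m ≤ M := hψM m hm1
      nlinarith [(hψ m).le]
    have h0 := measure_limsup_cofinite_eq_zero (μ := (volume : Measure (Fin (n + 1) → ℝ)))
      (s := s) hsum'
    exact le_antisymm ((measure_mono hsub).trans h0.le) zero_le
  -- cover the space by integer cubes
  have hcover : B ⊆ ⋃ t : Fin (n + 1) → ℤ,
      B ∩ Set.univ.pi fun k => Icc ((t k : ℝ)) ((t k : ℝ) + 1) := by
    intro h hh
    refine mem_iUnion.2 ⟨fun k => ⌊h k⌋, hh, fun k _ => ?_⟩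
    exact ⟨Int.floor_le _, (Int.lt_floor_add_one _).le⟩
  exact le_antisymm (le_of_le_of_eq (measure_mono hcover) (measure_iUnion_null key))
    zero_le

theorem stmt14 (K : ℕ) (hK : 2 ≤ K) (ψ : ℕ → ℝ) (hψ : ∀ q, 0 < ψ q)
    (hsum : Summable (fun q : ℕ => (q : ℝ) ^ (K - 2) * ψ q)) :
    MeasureTheory.volume {h : Fin (K - 1) → ℝ |
      {pq : ℤ × (Fin (K - 1) → ℤ) | pq.2 ≠ 0 ∧
        |(pq.1 : ℝ) + ∑ k, (pq.2 k : ℝ) * h k|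
          < ψ (Finset.univ.sup fun k => (pq.2 k).natAbs)}.Infinite} = 0 := by
  have h1 : K - 1 = (K - 2) + 1 := by omega
  rw [h1]
  exact master (K - 2) ψ hψ hsum
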